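/- arXiv:2312.12093 — 3 statements merged into one kernel-verified Lean document; each statement's English description precedes it below -/
import Mathlib

section
/- If T is a bounded linear operator on a complex Hilbert space with T² = 0, then w(T) = (1/2)‖T‖. -/
noncomputable def numRadius {E : Type*} [NormedAddCommGroup E] [InnerProductSpace ℂ E]
    (T : E →L[ℂ] E) : ℝ :=
  sSup {r : ℝ | ∃ x : E, ‖x‖ = 1 ∧ r = ‖(inner ℂ (T x) x : ℂ)‖}

noncomputable def blockOp {H : Type*} [NormedAddCommGroup H] [InnerProductSpace ℂ H]
    (n : ℕ) (M : Fin n → Fin n → H →L[ℂ] H) :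
    (PiLp 2 fun _ : Fin n => H) →L[ℂ] (PiLp 2 fun _ : Fin n => H) :=
  (PiLp.continuousLinearEquiv 2 ℂ (fun _ : Fin n => H)).symm.toContinuousLinearMap ∘L
    (ContinuousLinearMap.pi fun i => ∑ j, (M i j).comp (ContinuousLinearMap.proj j)) ∘L
    (PiLp.continuousLinearEquiv 2 ℂ (fun _ : Fin n => H)).toContinuousLinearMap

variable {H : Type*} [NormedAddCommGroup H] [InnerProductSpace ℂ H]

private lemma key_construct (T : H →L[ℂ] H) (h : T ∘L T = 0) (w : H) (hw : ‖w‖ = 1)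
    (hTw : T w ≠ 0) : ∃ x : H, ‖x‖ = 1 ∧ ‖T w‖ ≤ 2 * ‖(inner ℂ (T x) x : ℂ)‖ := by
  set t : ℝ := ‖T w‖ with ht
  have ht0 : 0 < t := norm_pos_iff.mpr hTw
  obtain ⟨u, hu⟩ : ∃ u : H, u = ((t : ℂ))⁻¹ • T w := ⟨_, rfl⟩
  have hT2 : T (T w) = 0 := by
    have := congrArg (fun S => S w) h; simpa using this
  have hTu : T u = 0 := by simp [hu, map_smul, hT2]
  have hnu : ‖u‖ = 1 := by
    rw [hu, norm_smul, norm_inv, Complex.norm_real, Real.norm_eq_abs,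
      abs_of_pos ht0, ← ht, inv_mul_cancel₀ ht0.ne']
  have hTwu : T w = (t : ℂ) • u := by
    rw [hu, smul_smul, mul_inv_cancel₀ (by exact_mod_cast ht0.ne'), one_smul]
  obtain ⟨a, ha⟩ : ∃ a : ℂ, a = inner ℂ u w := ⟨_, rfl⟩
  obtain ⟨e, he⟩ : ∃ e : H, e = w - a • u := ⟨_, rfl⟩
  have hue : (inner ℂ u e : ℂ) = 0 := by
    rw [he, inner_sub_right, inner_smul_right, inner_self_eq_norm_sq_to_K, hnu, ha]
    push_cast; ring
  have hTe : T e = T w := by simp [he, map_sub, map_smul, hTu]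
  have he0 : e ≠ 0 := by
    intro h0
    rw [h0, map_zero] at hTe
    exact hTw hTe.symm
  set c : ℝ := ‖e‖ with hc
  have hc0 : 0 < c := norm_pos_iff.mpr he0
  have hc1 : c ≤ 1 := by
    have hsq : c ^ 2 = 1 - ‖a‖ ^ 2 := by
      rw [hc, he, @norm_sub_sq ℂ H _ _ _ w (a • u), hw, norm_smul, hnu]
      have hre : RCLike.re (inner ℂ w (a • u) : ℂ) = ‖a‖ ^ 2 := by
        rw [inner_smul_right]
        have h1 : (inner ℂ w u : ℂ) = starRingEnd ℂ a := by rw [ha, inner_conj_symm]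
        rw [h1, Complex.mul_conj]
        simp [Complex.normSq_eq_norm_sq, ← Complex.ofReal_pow]
      rw [hre]; ring
    nlinarith [norm_nonneg a, sq_nonneg (‖a‖)]
  obtain ⟨x, hx⟩ : ∃ x : H, x = ((Real.sqrt 2 : ℂ))⁻¹ • (u + ((c : ℂ))⁻¹ • e) := ⟨_, rfl⟩
  have hs2 : (0:ℝ) < Real.sqrt 2 := Real.sqrt_pos.mpr (by norm_num)
  have hnorm_sum : ‖u + ((c : ℂ))⁻¹ • e‖ ^ 2 = 2 := by
    rw [@norm_add_sq ℂ H _ _ _ u _, hnu, inner_smul_right, hue, norm_smul, norm_inv,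
      Complex.norm_real, Real.norm_eq_abs, abs_of_pos hc0, ← hc]
    simp
    rw [inv_mul_cancel₀ hc0.ne']
    norm_num
  have hxn : ‖x‖ = 1 := by
    have h1 : ‖x‖ ^ 2 = 1 := by
      rw [hx, norm_smul, norm_inv, Complex.norm_real, Real.norm_eq_abs, abs_of_pos hs2,
        mul_pow, hnorm_sum, ← Real.sqrt_inv, Real.sq_sqrt (by norm_num)]
      norm_num
    nlinarith [norm_nonneg x]
  have hTx : T x = (((Real.sqrt 2 : ℂ))⁻¹ * ((c : ℂ))⁻¹) • T w := by
    have hstep : T (u + ((c:ℂ))⁻¹ • e) = ((c:ℂ))⁻¹ • T w := by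
      rw [map_add, map_smul, hTu, hTe, zero_add]
    rw [hx, map_smul, hstep, smul_smul]
  have hkey : (inner ℂ (T w) (u + ((c:ℂ))⁻¹ • e) : ℂ) = (t : ℂ) := by
    have h1 : (inner ℂ (T w) e : ℂ) = 0 := by
      rw [hTwu, inner_smul_left, hue, mul_zero]
    have h2 : (inner ℂ (T w) u : ℂ) = t := by
      rw [hTwu, inner_smul_left, inner_self_eq_norm_sq_to_K, hnu, Complex.conj_ofReal]
      push_cast; ring
    rw [inner_add_right, inner_smul_right, h1, h2, mul_zero, add_zero]
  have hcne : ((c:ℝ):ℂ) ≠ 0 := by exact_mod_cast hc0.ne'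
  have hsne : ((Real.sqrt 2:ℝ):ℂ) ≠ 0 := by exact_mod_cast hs2.ne'
  have hs2c : ((Real.sqrt 2:ℝ):ℂ) * ((Real.sqrt 2:ℝ):ℂ) = 2 := by
    norm_cast
    rw [Real.mul_self_sqrt (by norm_num)]
  have hinner : (inner ℂ (T x) x : ℂ) = ((t / (2 * c) : ℝ) : ℂ) := by
    rw [hTx, hx, inner_smul_left, inner_smul_right, hkey,
      map_mul, map_inv₀, map_inv₀, Complex.conj_ofReal, Complex.conj_ofReal]
    have hrhs : ((t / (2*c) : ℝ) : ℂ) = (t:ℂ) / (2 * (c:ℂ)) := by push_cast; ring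
    rw [hrhs, eq_div_iff (by simp [hcne])]
    have h2i : ((Real.sqrt 2:ℝ):ℂ)⁻¹ * ((Real.sqrt 2:ℝ):ℂ)⁻¹ = 2⁻¹ := by
      rw [← mul_inv, hs2c]
    have hci : ((c:ℝ):ℂ)⁻¹ * ((c:ℝ):ℂ) = 1 := inv_mul_cancel₀ hcne
    calc ((Real.sqrt 2:ℝ):ℂ)⁻¹ * ((c:ℝ):ℂ)⁻¹ * (((Real.sqrt 2:ℝ):ℂ)⁻¹ * (t:ℂ)) * (2 * (c:ℝ))
        = ((Real.sqrt 2:ℝ):ℂ)⁻¹ * ((Real.sqrt 2:ℝ):ℂ)⁻¹ * (((c:ℝ):ℂ)⁻¹ * ((c:ℝ):ℂ)) * 2 * (t:ℂ) := by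
          ring
      _ = (t:ℂ) := by rw [h2i, hci]; ring
  refine ⟨x, hxn, ?_⟩
  rw [hinner, Complex.norm_real, Real.norm_eq_abs, abs_of_pos (by positivity)]
  have hrw : 2 * (t / (2*c)) = t * c⁻¹ := by field_simp
  rw [hrw, ht]
  exact le_mul_of_one_le_right (norm_nonneg _) (one_le_inv_iff₀.mpr ⟨hc0, hc1⟩)


private lemma upper_bd [CompleteSpace H] (T : H →L[ℂ] H) (h : T ∘L T = 0)
    (x : H) (hx : ‖x‖ = 1) : ‖(inner ℂ (T x) x : ℂ)‖ ≤ ‖T‖ / 2 := by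
  set K : Submodule ℂ H := LinearMap.ker (T : H →ₗ[ℂ] H) with hK
  haveI : CompleteSpace K := (ContinuousLinearMap.isClosed_ker T).completeSpace_coe
  set u : H := (K.orthogonalProjection x : H) with hu
  set v : H := x - u with hv
  have huK : u ∈ K := (K.orthogonalProjection x).2
  have hvK : v ∈ Kᗮ := Submodule.sub_starProjection_mem_orthogonal (K := K) x
  have hTu : T u = 0 := huK
  have hTx : T x = T v := by rw [hv, map_sub, hTu, sub_zero]
  have hTvK : T v ∈ K := by
    have : T (T v) = 0 := by
      have := congrArg (fun S => S v) h; simpa using this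
    exact this
  have hinner0 : (inner ℂ (T v) v : ℂ) = 0 :=
    Submodule.inner_right_of_mem_orthogonal hTvK hvK
  have huv : (inner ℂ u v : ℂ) = 0 := Submodule.inner_right_of_mem_orthogonal huK hvK
  have hxuv : x = u + v := by rw [hv]; abel
  have hpyth : ‖u‖ ^ 2 + ‖v‖ ^ 2 = 1 := by
    have := @norm_add_sq ℂ H _ _ _ u v
    rw [← hxuv, hx, huv] at this
    simp at this
    linarith
  have hval : (inner ℂ (T x) x : ℂ) = inner ℂ (T v) u := by
    rw [hTx, hxuv, inner_add_right, hinner0, add_zero]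
  rw [hval]
  calc ‖(inner ℂ (T v) u : ℂ)‖ ≤ ‖T v‖ * ‖u‖ := norm_inner_le_norm _ _
    _ ≤ (‖T‖ * ‖v‖) * ‖u‖ := by
        gcongr
        exact T.le_opNorm v
    _ ≤ ‖T‖ * ((‖u‖ ^ 2 + ‖v‖ ^ 2) / 2) := by
        have h1 : ‖v‖ * ‖u‖ ≤ (‖u‖ ^ 2 + ‖v‖ ^ 2) / 2 := by nlinarith [sq_nonneg (‖u‖ - ‖v‖)]
        have := mul_le_mul_of_nonneg_left h1 (norm_nonneg T)
        linarith [this]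
    _ = ‖T‖ / 2 := by rw [hpyth]; ring

theorem stmt1 [CompleteSpace H] (T : H →L[ℂ] H) (h : T ∘L T = 0) :
    numRadius T = (1 / 2) * ‖T‖ := by
  set S := {r : ℝ | ∃ x : H, ‖x‖ = 1 ∧ r = ‖(inner ℂ (T x) x : ℂ)‖} with hS
  have hnonneg : ∀ r ∈ S, 0 ≤ r := by rintro r ⟨x, hx, rfl⟩; positivity
  have hbdd : BddAbove S := by
    refine ⟨‖T‖, ?_⟩
    rintro r ⟨x, hx, rfl⟩
    calc ‖(inner ℂ (T x) x : ℂ)‖ ≤ ‖T x‖ * ‖x‖ := norm_inner_le_norm _ _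
      _ ≤ ‖T‖ * ‖x‖ * ‖x‖ := by gcongr; exact T.le_opNorm x
      _ = ‖T‖ := by rw [hx]; ring
  have hle : sSup S ≤ ‖T‖ / 2 := by
    refine Real.sSup_le ?_ (by positivity)
    rintro r ⟨x, hx, rfl⟩
    exact upper_bd T h x hx
  have hsup0 : 0 ≤ sSup S := Real.sSup_nonneg hnonneg
  have hge : ‖T‖ ≤ 2 * sSup S := by
    refine T.opNorm_le_bound (by linarith) ?_
    intro v
    by_cases hv : T v = 0
    · rw [hv, norm_zero]; positivity
    · have hv0 : v ≠ 0 := fun h0 => hv (by simp [h0])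
      have hnv : (0:ℝ) < ‖v‖ := norm_pos_iff.mpr hv0
      set w : H := ((‖v‖ : ℂ))⁻¹ • v with hwdef
      have hwn : ‖w‖ = 1 := by
        rw [hwdef, norm_smul, norm_inv, Complex.norm_real, Real.norm_eq_abs,
          abs_of_pos hnv, inv_mul_cancel₀ hnv.ne']
      have hTw : T w = ((‖v‖ : ℂ))⁻¹ • T v := by rw [hwdef, map_smul]
      have hTwne : T w ≠ 0 := by
        rw [hTw]
        intro hz
        rcases smul_eq_zero.mp hz with h1 | h1
        · exact hnv.ne' (Complex.ofReal_eq_zero.mp (inv_eq_zero.mp h1))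
        · exact hv h1
      obtain ⟨x, hx1, hx2⟩ := key_construct T h w hwn hTwne
      have hmem : ‖(inner ℂ (T x) x : ℂ)‖ ∈ S := ⟨x, hx1, rfl⟩
      have hTws : ‖T w‖ ≤ 2 * sSup S :=
        le_trans hx2 (by gcongr; exact le_csSup hbdd hmem)
      have hTwnorm : ‖T w‖ = ‖v‖⁻¹ * ‖T v‖ := by
        rw [hTw, norm_smul, norm_inv, Complex.norm_real, Real.norm_eq_abs, abs_of_pos hnv]
      calc ‖T v‖ = ‖v‖ * ‖T w‖ := by
            rw [hTwnorm, ← mul_assoc, mul_inv_cancel₀ hnv.ne', one_mul]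
        _ ≤ ‖v‖ * (2 * sSup S) := by gcongr
        _ = 2 * sSup S * ‖v‖ := by ring
  show sSup S = 1 / 2 * ‖T‖
  linarith
end

section
/- For bounded operators T₁, T₂ on a complex Hilbert space H, the numerical radius of the block operator [[T₁, T₂],[T₂, T₁]] on H ⊕ H equals max{w(T₁ + T₂), w(T₁ − T₂)}. -/
set_option linter.unusedSectionVars false
set_option maxHeartbeats 1000000

section aux

variable {E : Type*} [NormedAddCommGroup E] [InnerProductSpace ℂ E]

lemma numRadius_bddAbove (T : E →L[ℂ] E) :
    BddAbove {r : ℝ | ∃ x : E, ‖x‖ = 1 ∧ r = ‖(inner ℂ (T x) x : ℂ)‖} := by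
  refine ⟨‖T‖, ?_⟩
  rintro r ⟨x, hx, rfl⟩
  calc ‖(inner ℂ (T x) x : ℂ)‖ ≤ ‖T x‖ * ‖x‖ := norm_inner_le_norm _ _
    _ ≤ ‖T‖ * ‖x‖ * ‖x‖ := by gcongr; exact T.le_opNorm x
    _ = ‖T‖ := by rw [hx]; ring

lemma numRadius_nonneg (T : E →L[ℂ] E) : 0 ≤ numRadius T :=
  Real.sSup_nonneg (by rintro r ⟨x, hx, rfl⟩; positivity)

lemma inner_le_numRadius (T : E →L[ℂ] E) (y : E) :
    ‖(inner ℂ (T y) y : ℂ)‖ ≤ numRadius T * ‖y‖ ^ 2 := by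
  rcases eq_or_ne y 0 with rfl | hy
  · simp
  · have hny : (0:ℝ) < ‖y‖ := norm_pos_iff.mpr hy
    set x := ((‖y‖:ℂ))⁻¹ • y with hxdef
    have hx : ‖x‖ = 1 := by
      rw [hxdef, norm_smul, norm_inv, Complex.norm_real, norm_norm,
        inv_mul_cancel₀ hny.ne']
    have hmem : ‖(inner ℂ (T x) x : ℂ)‖ ∈
        {r : ℝ | ∃ x : E, ‖x‖ = 1 ∧ r = ‖(inner ℂ (T x) x : ℂ)‖} := ⟨x, hx, rfl⟩
    have hle := le_csSup (numRadius_bddAbove T) hmem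
    have hval : ‖(inner ℂ (T x) x : ℂ)‖ = (‖y‖^2)⁻¹ * ‖(inner ℂ (T y) y : ℂ)‖ := by
      rw [hxdef, map_smul, inner_smul_left, inner_smul_right, norm_mul, norm_mul,
        RCLike.norm_conj, norm_inv, Complex.norm_real, norm_norm]
      ring
    rw [hval] at hle
    have := mul_le_mul_of_nonneg_right hle (le_of_lt (pow_pos hny 2))
    rwa [inv_mul_eq_div, div_mul_cancel₀] at this
    positivity

end aux

variable {H : Type*} [NormedAddCommGroup H] [InnerProductSpace ℂ H]

lemma blockOp_apply (n : ℕ) (M : Fin n → Fin n → H →L[ℂ] H)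
    (x : PiLp 2 fun _ : Fin n => H) (i : Fin n) :
    blockOp n M x i = ∑ j, M i j (x j) := by
  simp [blockOp, ContinuousLinearMap.sum_apply]

lemma block_inner (T₁ T₂ : H →L[ℂ] H) (x : PiLp 2 fun _ : Fin 2 => H) :
    (inner ℂ (blockOp 2 !![T₁, T₂; T₂, T₁] x) x : ℂ) =
      (inner ℂ ((T₁ + T₂) (x 0 + x 1)) (x 0 + x 1)
        + inner ℂ ((T₁ - T₂) (x 0 - x 1)) (x 0 - x 1)) / 2 := by
  rw [PiLp.inner_apply, Fin.sum_univ_two]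
  erw [blockOp_apply, blockOp_apply]
  simp only [Fin.sum_univ_two, ContinuousLinearMap.add_apply, ContinuousLinearMap.sub_apply,
    map_add, map_sub, inner_add_left, inner_add_right, inner_sub_left, inner_sub_right]
  have e00 : !![T₁, T₂; T₂, T₁] 0 0 = T₁ := rfl
  have e01 : !![T₁, T₂; T₂, T₁] 0 1 = T₂ := rfl
  have e10 : !![T₁, T₂; T₂, T₁] 1 0 = T₂ := rfl
  have e11 : !![T₁, T₂; T₂, T₁] 1 1 = T₁ := rfl
  rw [e00, e01, e10, e11]
  ring

lemma pi2_norm_sq (x : PiLp 2 fun _ : Fin 2 => H) : ‖x‖ ^ 2 = ‖x 0‖ ^ 2 + ‖x 1‖ ^ 2 := by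
  rw [PiLp.norm_sq_eq_of_L2]
  simp [Fin.sum_univ_two]

lemma block_lower (T₁ T₂ : H →L[ℂ] H) (u : H) (hu : ‖u‖ = 1) (σ : ℂ)
    (hσ : σ = 1 ∨ σ = -1) :
    ∃ x : PiLp 2 fun _ : Fin 2 => H, ‖x‖ = 1 ∧
      (inner ℂ (blockOp 2 !![T₁, T₂; T₂, T₁] x) x : ℂ)
        = inner ℂ ((T₁ + σ • T₂) u) u := by
  set c : ℂ := ((Real.sqrt 2 : ℝ) : ℂ)⁻¹ with hc
  have hcnorm : ‖c‖ = (Real.sqrt 2)⁻¹ := by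
    rw [hc, norm_inv, Complex.norm_real, Real.norm_eq_abs,
      abs_of_nonneg (Real.sqrt_nonneg 2)]
  have hcc : c * c = 1 / 2 := by
    rw [hc, ← mul_inv, ← Complex.ofReal_mul, Real.mul_self_sqrt (by norm_num)]
    norm_num
  have hconj : (starRingEnd ℂ) c = c := by rw [hc, map_inv₀, Complex.conj_ofReal]
  have hσconj : (starRingEnd ℂ) σ = σ := by rcases hσ with rfl | rfl <;> simp
  refine ⟨(WithLp.equiv 2 (∀ _ : Fin 2, H)).symm ![c • u, (σ * c) • u], ?_, ?_⟩
  · have h0 : ((WithLp.equiv 2 (∀ _ : Fin 2, H)).symm ![c • u, (σ * c) • u] :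
        PiLp 2 fun _ : Fin 2 => H) 0 = c • u := rfl
    have h1 : ((WithLp.equiv 2 (∀ _ : Fin 2, H)).symm ![c • u, (σ * c) • u] :
        PiLp 2 fun _ : Fin 2 => H) 1 = (σ * c) • u := rfl
    have hσn : ‖σ‖ = 1 := by rcases hσ with rfl | rfl <;> simp
    have h2 : ‖((WithLp.equiv 2 (∀ _ : Fin 2, H)).symm ![c • u, (σ * c) • u] :
        PiLp 2 fun _ : Fin 2 => H)‖ ^ 2 = 1 := by
      rw [pi2_norm_sq, h0, h1, norm_smul, norm_smul, norm_mul, hσn, hcnorm, hu]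
      rw [mul_one, mul_one, one_mul, inv_pow, Real.sq_sqrt (by norm_num : (0:ℝ) ≤ 2)]
      norm_num
    nlinarith [norm_nonneg ((WithLp.equiv 2 (∀ _ : Fin 2, H)).symm ![c • u, (σ * c) • u] :
      PiLp 2 fun _ : Fin 2 => H), h2]
  · rw [block_inner]
    have h0 : ((WithLp.equiv 2 (∀ _ : Fin 2, H)).symm ![c • u, (σ * c) • u] :
        PiLp 2 fun _ : Fin 2 => H) 0 = c • u := rfl
    have h1 : ((WithLp.equiv 2 (∀ _ : Fin 2, H)).symm ![c • u, (σ * c) • u] :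
        PiLp 2 fun _ : Fin 2 => H) 1 = (σ * c) • u := rfl
    rw [h0, h1, ← add_smul, ← sub_smul]
    simp only [map_smul, inner_smul_left, inner_smul_right,
      ContinuousLinearMap.add_apply, ContinuousLinearMap.sub_apply, map_add, map_sub,
      inner_add_left, inner_sub_left, ContinuousLinearMap.smul_apply, inner_smul_left]
    rcases hσ with rfl | rfl
    · simp only [one_mul, map_one, hconj]
      linear_combination (2 * ((inner ℂ (T₁ u) u : ℂ) + (inner ℂ (T₂ u) u : ℂ))) * hcc
    · simp only [neg_mul, one_mul, map_neg, map_one, hconj]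
      linear_combination (2 * ((inner ℂ (T₁ u) u : ℂ) - (inner ℂ (T₂ u) u : ℂ))) * hcc

theorem stmt5 (T₁ T₂ : H →L[ℂ] H) :
    numRadius (blockOp 2 !![T₁, T₂; T₂, T₁]) =
      max (numRadius (T₁ + T₂)) (numRadius (T₁ - T₂)) := by
  apply le_antisymm
  · apply Real.sSup_le
    · rintro r ⟨x, hx, rfl⟩
      rw [block_inner]
      set a := x 0
      set b := x 1
      have hpar : ‖a + b‖ ^ 2 + ‖a - b‖ ^ 2 = 2 * (‖a‖ ^ 2 + ‖b‖ ^ 2) := by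
        have := parallelogram_law_with_norm ℂ a b
        nlinarith [this]
      have hab : ‖a‖ ^ 2 + ‖b‖ ^ 2 = 1 := by
        have h := pi2_norm_sq x
        rw [hx] at h
        simpa using h.symm
      set m := max (numRadius (T₁ + T₂)) (numRadius (T₁ - T₂)) with hm
      have hm0 : 0 ≤ m := le_trans (numRadius_nonneg (T₁ + T₂)) (le_max_left _ _)
      calc ‖((inner ℂ ((T₁ + T₂) (a + b)) (a + b)
              + inner ℂ ((T₁ - T₂) (a - b)) (a - b) : ℂ)) / 2‖
          ≤ (‖(inner ℂ ((T₁ + T₂) (a + b)) (a + b) : ℂ)‖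
              + ‖(inner ℂ ((T₁ - T₂) (a - b)) (a - b) : ℂ)‖) / 2 := by
            rw [norm_div, Complex.norm_ofNat]
            gcongr
            exact norm_add_le _ _
        _ ≤ (numRadius (T₁ + T₂) * ‖a + b‖ ^ 2 + numRadius (T₁ - T₂) * ‖a - b‖ ^ 2) / 2 := by
            gcongr <;> [exact inner_le_numRadius _ _ ; exact inner_le_numRadius _ _]
        _ ≤ (m * ‖a + b‖ ^ 2 + m * ‖a - b‖ ^ 2) / 2 := by
            gcongr <;> [exact le_max_left _ _ ; exact le_max_right _ _]
        _ = m * ((‖a + b‖ ^ 2 + ‖a - b‖ ^ 2) / 2) := by ring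
        _ = m := by rw [hpar, hab]; ring
    · exact le_trans (numRadius_nonneg (T₁ + T₂)) (le_max_left _ _)
  · have key : ∀ (σ : ℂ), σ = 1 ∨ σ = -1 →
        numRadius (T₁ + σ • T₂) ≤ numRadius (blockOp 2 !![T₁, T₂; T₂, T₁]) := by
      intro σ hσ
      apply Real.sSup_le
      · rintro r ⟨u, hu, rfl⟩
        obtain ⟨x, hxn, hxi⟩ := block_lower T₁ T₂ u hu σ hσ
        exact le_csSup (numRadius_bddAbove _) ⟨x, hxn, by rw [hxi]⟩
      · exact numRadius_nonneg _
    have h1 := key 1 (Or.inl rfl)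
    have h2 := key (-1) (Or.inr rfl)
    rw [one_smul] at h1
    rw [neg_one_smul] at h2
    rw [← sub_eq_add_neg] at h2
    exact max_le h1 h2
end

section
/- Let S₁₁ and X be bounded operators on a complex Hilbert space H with ‖X‖ ≤ π, and suppose S is an operator with w(S) ≤ 1 (e.g., a contraction such as the unilateral shift). Then the numerical radius of the Foguel-type operator [[S*, X],[O, S]] on H ⊕ H is at most 3/2 + (1/2)√(1 + π²). -/
lemma numRadius_bound {E : Type*} [NormedAddCommGroup E] [InnerProductSpace ℂ E]
    (S : E →L[ℂ] E) (hS : numRadius S ≤ 1) (y : E) :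
    ‖(inner ℂ (S y) y : ℂ)‖ ≤ ‖y‖ ^ 2 := by
  rcases eq_or_ne y 0 with rfl | hy
  · simp
  · have hc : (0:ℝ) < ‖y‖ := norm_pos_iff.mpr hy
    set u : E := (‖y‖:ℂ)⁻¹ • y with hu
    have hun : ‖u‖ = 1 := by
      simp [hu, norm_smul, hc.ne']
    have hmem : ‖(inner ℂ (S u) u : ℂ)‖ ∈
        {r : ℝ | ∃ x : E, ‖x‖ = 1 ∧ r = ‖(inner ℂ (S x) x : ℂ)‖} := ⟨u, hun, rfl⟩
    have hbdd : BddAbove {r : ℝ | ∃ x : E, ‖x‖ = 1 ∧ r = ‖(inner ℂ (S x) x : ℂ)‖} := by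
      refine ⟨‖S‖, fun r hr => ?_⟩
      obtain ⟨x, hx, rfl⟩ := hr
      calc ‖(inner ℂ (S x) x : ℂ)‖ ≤ ‖S x‖ * ‖x‖ := norm_inner_le_norm _ _
        _ ≤ ‖S‖ * ‖x‖ * ‖x‖ := by
            have := S.le_opNorm x
            nlinarith [norm_nonneg x]
        _ = ‖S‖ := by rw [hx]; ring
    have hle : ‖(inner ℂ (S u) u : ℂ)‖ ≤ numRadius S := le_csSup hbdd hmem
    have hkey : ‖(inner ℂ (S u) u : ℂ)‖ = ‖y‖⁻¹ ^ 2 * ‖(inner ℂ (S y) y : ℂ)‖ := by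
      rw [hu]
      rw [map_smul, inner_smul_left, inner_smul_right]
      rw [norm_mul, norm_mul]
      rw [norm_inv, RCLike.norm_conj, norm_inv]
      simp only [Complex.norm_real, Real.norm_eq_abs, abs_of_pos hc]
      ring
    have : ‖(inner ℂ (S y) y : ℂ)‖ = ‖y‖ ^ 2 * ‖(inner ℂ (S u) u : ℂ)‖ := by
      rw [hkey]
      field_simp
    rw [this]
    calc ‖y‖ ^ 2 * ‖(inner ℂ (S u) u : ℂ)‖ ≤ ‖y‖ ^ 2 * 1 := by
          have h1 := hle.trans hS
          nlinarith [sq_nonneg ‖y‖]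
      _ = ‖y‖ ^ 2 := by ring

variable {H : Type*} [NormedAddCommGroup H] [InnerProductSpace ℂ H]
theorem stmt19 [CompleteSpace H] (S X : H →L[ℂ] H)
    (hS : numRadius S ≤ 1) (hX : ‖X‖ ≤ Real.pi) :
    numRadius (blockOp 2 !![ContinuousLinearMap.adjoint S, X; 0, S]) ≤
      3 / 2 + (1 / 2) * Real.sqrt (1 + Real.pi ^ 2) := by
  have hpi : (0:ℝ) < Real.pi := Real.pi_pos
  have hsqrt : Real.pi ≤ Real.sqrt (1 + Real.pi ^ 2) := by
    have : Real.pi = Real.sqrt (Real.pi ^ 2) := by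
      rw [Real.sqrt_sq hpi.le]
    rw [this]
    apply Real.sqrt_le_sqrt
    nlinarith [Real.sq_sqrt hpi.le]
  have hRHS : (1:ℝ) + Real.pi / 2 ≤ 3 / 2 + (1 / 2) * Real.sqrt (1 + Real.pi ^ 2) := by
    nlinarith
  have hRHS0 : (0:ℝ) ≤ 3 / 2 + (1 / 2) * Real.sqrt (1 + Real.pi ^ 2) := by
    nlinarith [Real.sqrt_nonneg (1 + Real.pi ^ 2)]
  apply Real.sSup_le _ hRHS0
  rintro r ⟨x, hx, rfl⟩
  -- compute the block action
  set T := blockOp 2 !![ContinuousLinearMap.adjoint S, X; 0, S] with hT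
  have hTx : ∀ i, (T x) i = ∑ j, (!![ContinuousLinearMap.adjoint S, X; 0, S] i j) (x j) := by
    intro i
    simp [hT, blockOp, ContinuousLinearMap.sum_apply]
  have h0 : (T x) 0 = (ContinuousLinearMap.adjoint S) (x 0) + X (x 1) := by
    rw [hTx 0, Fin.sum_univ_two]
    simp
  have h1 : (T x) 1 = S (x 1) := by
    rw [hTx 1, Fin.sum_univ_two]
    simp
  have hinner : (inner ℂ (T x) x : ℂ) =
      inner ℂ ((ContinuousLinearMap.adjoint S) (x 0) + X (x 1)) (x 0) + inner ℂ (S (x 1)) (x 1) := by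
    rw [PiLp.inner_apply, Fin.sum_univ_two, h0, h1]
  have hnormsq : ‖x 0‖ ^ 2 + ‖x 1‖ ^ 2 = 1 := by
    have := PiLp.norm_sq_eq_of_L2 (fun _ : Fin 2 => H) x
    rw [hx] at this
    simp [Fin.sum_univ_two] at this
    linarith [this.symm]
  have hb1 : ‖(inner ℂ ((ContinuousLinearMap.adjoint S) (x 0)) (x 0) : ℂ)‖ ≤ ‖x 0‖ ^ 2 := by
    rw [ContinuousLinearMap.adjoint_inner_left]
    rw [← inner_conj_symm]
    rw [RCLike.norm_conj]
    exact numRadius_bound S hS (x 0)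
  have hb2 : ‖(inner ℂ (S (x 1)) (x 1) : ℂ)‖ ≤ ‖x 1‖ ^ 2 := numRadius_bound S hS (x 1)
  have hb3 : ‖(inner ℂ (X (x 1)) (x 0) : ℂ)‖ ≤ Real.pi * (‖x 1‖ * ‖x 0‖) := by
    calc ‖(inner ℂ (X (x 1)) (x 0) : ℂ)‖ ≤ ‖X (x 1)‖ * ‖x 0‖ := norm_inner_le_norm _ _
      _ ≤ (‖X‖ * ‖x 1‖) * ‖x 0‖ := by
          have := X.le_opNorm (x 1)
          nlinarith [norm_nonneg (x 0)]
      _ ≤ Real.pi * (‖x 1‖ * ‖x 0‖) := by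
          nlinarith [mul_nonneg (norm_nonneg (x 1)) (norm_nonneg (x 0)), hX]
  have hab : ‖x 1‖ * ‖x 0‖ ≤ 1 / 2 := by
    nlinarith [sq_nonneg (‖x 0‖ - ‖x 1‖)]
  calc ‖(inner ℂ (T x) x : ℂ)‖
      ≤ ‖(inner ℂ ((ContinuousLinearMap.adjoint S) (x 0)) (x 0) : ℂ)‖
        + ‖(inner ℂ (X (x 1)) (x 0) : ℂ)‖ + ‖(inner ℂ (S (x 1)) (x 1) : ℂ)‖ := by
        rw [hinner, inner_add_left]
        calc ‖(inner ℂ ((ContinuousLinearMap.adjoint S) (x 0)) (x 0) : ℂ)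
              + inner ℂ (X (x 1)) (x 0) + inner ℂ (S (x 1)) (x 1)‖
            ≤ ‖(inner ℂ ((ContinuousLinearMap.adjoint S) (x 0)) (x 0) : ℂ)
              + inner ℂ (X (x 1)) (x 0)‖ + ‖(inner ℂ (S (x 1)) (x 1) : ℂ)‖ := norm_add_le _ _
          _ ≤ _ := by
              have := norm_add_le (inner ℂ ((ContinuousLinearMap.adjoint S) (x 0)) (x 0) : ℂ)
                (inner ℂ (X (x 1)) (x 0))
              linarith
    _ ≤ ‖x 0‖ ^ 2 + Real.pi * (‖x 1‖ * ‖x 0‖) + ‖x 1‖ ^ 2 := by linarith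
    _ ≤ 1 + Real.pi / 2 := by nlinarith
    _ ≤ 3 / 2 + (1 / 2) * Real.sqrt (1 + Real.pi ^ 2) := hRHS
end
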